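/- For every n ≥ 1 and every S ⊆ {0,…,n−1}, the Fourier–Walsh coefficients of Λ̃ and Λ satisfy the exact identity Λ̃̂(S) = (n/2 − |S|) Λ̂(S) + (1/2) Σ_{j ∈ S} Λ̂(S∖{j}) − (1/2) Σ_{j ∈ {0,…,n−1}∖S} Λ̂(S∪{j}). -/

import Mathlib

open Finset

/-- The von Mangoldt function on `ℕ` (with `Λ 0 = 0`). -/
noncomputable def vM : ℕ → ℝ := fun x => ArithmeticFunction.vonMangoldt x

/-- The `j`-th binary digit of `x`. -/
def bit (x j : ℕ) : ℕ := x / 2 ^ j % 2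

/-- The Walsh function `w_S(x) = ∏_{j ∈ S} (1 - 2 x_j)`. -/
noncomputable def walsh (S : Finset ℕ) (x : ℕ) : ℝ := ∏ j ∈ S, (1 - 2 * (bit x j : ℝ))

/-- Fourier–Walsh coefficient `ĝ(S) = 2^{-n} ∑_{x < 2^n} g(x) w_S(x)`. -/
noncomputable def fwCoeff (n : ℕ) (g : ℕ → ℝ) (S : Finset ℕ) : ℝ :=
  ((2 : ℝ) ^ n)⁻¹ * ∑ x ∈ range (2 ^ n), g x * walsh S x

/-- Expectation `E[g] = 2^{-n} ∑_{x < 2^n} g(x)`. -/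
noncomputable def expect (n : ℕ) (g : ℕ → ℝ) : ℝ :=
  ((2 : ℝ) ^ n)⁻¹ * ∑ x ∈ range (2 ^ n), g x

/-- Normalized inner product `⟨g, h⟩ = 2^{-n} ∑_{x < 2^n} g(x) h(x)`. -/
noncomputable def ip (n : ℕ) (g h : ℕ → ℝ) : ℝ :=
  ((2 : ℝ) ^ n)⁻¹ * ∑ x ∈ range (2 ^ n), g x * h x

/-- `f` is a Boolean function (with values `0` or `1`). -/
def IsBoolean (f : ℕ → ℝ) : Prop := ∀ x, f x = 0 ∨ f x = 1

/-- `f` is a monotone Boolean function on `{0,1}^n` (under binary-digit identification). -/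
def IsMonotoneBool (n : ℕ) (f : ℕ → ℝ) : Prop :=
  IsBoolean f ∧
    ∀ x y, x < 2 ^ n → y < 2 ^ n → (∀ j < n, bit x j ≤ bit y j) → f x ≤ f y

/-- The function `Λ̃(y) = ∑_{j < n, y_j = 0} Λ(y + 2^j)`. -/
noncomputable def vMtilde (n : ℕ) (y : ℕ) : ℝ :=
  ∑ j ∈ (range n).filter (fun j => bit y j = 0), vM (y + 2 ^ j)



lemma bit_cases (x j : ℕ) : bit x j = 0 ∨ bit x j = 1 := Nat.mod_two_eq_zero_or_one _

lemma bit_eq_mod (x j : ℕ) : bit x j = x % 2 ^ (j + 1) / 2 ^ j := by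
  rw [bit, pow_succ]
  exact (Nat.mod_mul_right_div_self x (2 ^ j) 2).symm

lemma mod_lt_of_bit0 {y j : ℕ} (h : bit y j = 0) : y % 2 ^ (j + 1) < 2 ^ j := by
  rw [bit_eq_mod] at h
  by_contra hc
  push_neg at hc
  have := (Nat.one_le_div_iff (Nat.two_pow_pos j)).mpr hc
  omega

lemma bit_add_self {y j : ℕ} (h : bit y j = 0) : bit (y + 2 ^ j) j = 1 := by
  have h2 : (y + 2 ^ j) / 2 ^ j = y / 2 ^ j + 1 :=
    Nat.add_div_right y (Nat.two_pow_pos j)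
  rw [bit] at *
  rw [h2]
  omega

lemma bit_add_lt {y j k : ℕ} (hk : k < j) : bit (y + 2 ^ j) k = bit y k := by
  have : y + 2 ^ j = y + 2 ^ k * (2 * 2 ^ (j - k - 1)) := by
    rw [← pow_succ']
    rw [← pow_add]
    congr 2
    omega
  rw [bit, bit, this, Nat.add_mul_div_left _ _ (Nat.two_pow_pos k)]
  omega

lemma div_add_pow {y j : ℕ} (h : bit y j = 0) : (y + 2 ^ j) / 2 ^ (j + 1) = y / 2 ^ (j + 1) := by
  have hr := mod_lt_of_bit0 h
  have hd := Nat.div_add_mod y (2 ^ (j + 1))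
  have hp : 0 < 2 ^ (j + 1) := Nat.two_pow_pos _
  have hps : (2:ℕ) ^ (j + 1) = 2 ^ j * 2 := pow_succ 2 j
  have h2 : y + 2 ^ j = 2 ^ (j + 1) * (y / 2 ^ (j + 1)) + (y % 2 ^ (j + 1) + 2 ^ j) := by omega
  have h3 : (y % 2 ^ (j + 1) + 2 ^ j) / 2 ^ (j + 1) = 0 := Nat.div_eq_of_lt (by omega)
  rw [h2, Nat.mul_add_div hp, h3, Nat.add_zero]

lemma bit_add_gt {y j k : ℕ} (h : bit y j = 0) (hk : j < k) : bit (y + 2 ^ j) k = bit y k := by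
  have hk2 : k = (j + 1) + (k - j - 1) := by omega
  have e : ∀ z : ℕ, z / 2 ^ k = z / 2 ^ (j + 1) / 2 ^ (k - j - 1) := by
    intro z
    rw [Nat.div_div_eq_div_mul, ← pow_add, ← hk2]
  rw [bit, bit, e, e, div_add_pow h]

lemma bit_add_ne {y j k : ℕ} (h : bit y j = 0) (hk : k ≠ j) : bit (y + 2 ^ j) k = bit y k := by
  rcases lt_or_gt_of_ne hk with h' | h'
  · exact bit_add_lt h'
  · exact bit_add_gt h h'

lemma add_pow_lt {y j n : ℕ} (h : bit y j = 0) (hy : y < 2 ^ n) (hj : j < n) :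
    y + 2 ^ j < 2 ^ n := by
  have hd := Nat.div_add_mod y (2 ^ (j + 1))
  have hr := mod_lt_of_bit0 h
  have hq : y / 2 ^ (j + 1) < 2 ^ (n - j - 1) := by
    apply Nat.div_lt_of_lt_mul
    calc y < 2 ^ n := hy
    _ = 2 ^ (j + 1) * 2 ^ (n - j - 1) := by rw [← pow_add]; congr 1; omega
  have : 2 ^ n = 2 ^ (j + 1) * 2 ^ (n - j - 1) := by rw [← pow_add]; congr 1; omega
  have hps : (2:ℕ) ^ (j+1) = 2 * 2 ^ j := by rw [pow_succ']
  nlinarith [Nat.two_pow_pos j]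

lemma le_of_bit1 {x j : ℕ} (h : bit x j = 1) : 2 ^ j ≤ x := by
  rw [bit] at h
  by_contra hc
  push_neg at hc
  rw [Nat.div_eq_of_lt hc] at h
  simp at h

lemma bit_sub_self {x j : ℕ} (h : bit x j = 1) : bit (x - 2 ^ j) j = 0 := by
  have hle := le_of_bit1 h
  rw [bit_eq_mod] at h ⊢
  have hp : 0 < 2 ^ j := Nat.two_pow_pos _
  have hps : (2:ℕ) ^ (j+1) = 2 * 2 ^ j := by rw [pow_succ']
  have hrlt : x % 2 ^ (j + 1) < 2 ^ (j + 1) := Nat.mod_lt _ (by positivity)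
  have hrge : 2 ^ j ≤ x % 2 ^ (j + 1) := by
    by_contra hc
    push_neg at hc
    rw [Nat.div_eq_of_lt hc] at h
    simp at h
  have hd := Nat.div_add_mod x (2 ^ (j + 1))
  have h2 : x - 2 ^ j = 2 ^ (j + 1) * (x / 2 ^ (j + 1)) + (x % 2 ^ (j + 1) - 2 ^ j) := by omega
  rw [h2, Nat.mul_add_mod, Nat.mod_eq_of_lt (by omega), Nat.div_eq_of_lt (by omega)]

lemma sum_key (n j : ℕ) (hj : j < n) (T : Finset ℕ) (hT : j ∉ T) :
    ∑ y ∈ (range (2 ^ n)).filter (fun y => bit y j = 0), vM (y + 2 ^ j) * walsh T y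
      = (1 / 2) * ∑ x ∈ range (2 ^ n), vM x * walsh T x
        - (1 / 2) * ∑ x ∈ range (2 ^ n), vM x * walsh (insert j T) x := by
  have h1 : ∑ y ∈ (range (2 ^ n)).filter (fun y => bit y j = 0), vM (y + 2 ^ j) * walsh T y
      = ∑ x ∈ (range (2 ^ n)).filter (fun x => bit x j = 1), vM x * walsh T x := by
    apply Finset.sum_nbij' (i := fun y => y + 2 ^ j) (j := fun x => x - 2 ^ j)
    · intro y hy
      rw [Finset.mem_filter, Finset.mem_range] at hy ⊢
      exact ⟨add_pow_lt hy.2 hy.1 hj, bit_add_self hy.2⟩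
    · intro x hx
      rw [Finset.mem_filter, Finset.mem_range] at hx ⊢
      exact ⟨lt_of_le_of_lt (Nat.sub_le x _) hx.1, bit_sub_self hx.2⟩
    · intro y _
      omega
    · intro x hx
      rw [Finset.mem_filter] at hx
      have := le_of_bit1 hx.2
      omega
    · intro y hy
      rw [Finset.mem_filter] at hy
      congr 1
      unfold walsh
      apply Finset.prod_congr rfl
      intro k hk
      rw [bit_add_ne hy.2 (fun e => hT (e ▸ hk))]
  have h2 : ∑ x ∈ (range (2 ^ n)).filter (fun x => bit x j = 1), vM x * walsh T x
      = ∑ x ∈ range (2 ^ n), (bit x j : ℝ) * (vM x * walsh T x) := by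
    rw [Finset.sum_filter]
    apply Finset.sum_congr rfl
    intro x _
    rcases bit_cases x j with h | h <;> simp [h]
  have h3 : ∀ x, (bit x j : ℝ) * (vM x * walsh T x)
      = (1 / 2) * (vM x * walsh T x) - (1 / 2) * (vM x * walsh (insert j T) x) := by
    intro x
    have he : walsh (insert j T) x = (1 - 2 * (bit x j : ℝ)) * walsh T x :=
      Finset.prod_insert hT
    rw [he]; ring
  rw [h1, h2]
  simp_rw [h3]
  rw [Finset.sum_sub_distrib, ← Finset.mul_sum, ← Finset.mul_sum]

/-- exact identity for the Fourier–Walsh coefficients of `Λ̃`. -/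
theorem vMtilde_fwCoeff_eq (n : ℕ) (hn : 1 ≤ n) (S : Finset ℕ) (hS : S ⊆ range n) :
    fwCoeff n (vMtilde n) S =
      ((n : ℝ) / 2 - (S.card : ℝ)) * fwCoeff n vM S
        + (1 / 2) * ∑ j ∈ S, fwCoeff n vM (S.erase j)
        - (1 / 2) * ∑ j ∈ (range n) \ S, fwCoeff n vM (insert j S) := by
  classical
  have hcard : S.card ≤ n := by
    simpa using Finset.card_le_card hS
  set R : Finset ℕ → ℝ := fun T => ∑ x ∈ range (2 ^ n), vM x * walsh T x with hR
  have swap : ∑ y ∈ range (2 ^ n), vMtilde n y * walsh S y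
      = ∑ j ∈ range n, ∑ y ∈ (range (2 ^ n)).filter (fun y => bit y j = 0),
          vM (y + 2 ^ j) * walsh S y := by
    unfold vMtilde
    simp_rw [Finset.sum_mul, Finset.sum_filter]
    exact Finset.sum_comm
  have hmain : ∑ y ∈ range (2 ^ n), vMtilde n y * walsh S y
      = ∑ j ∈ (range n) \ S, ((1 / 2) * R S - (1 / 2) * R (insert j S))
        + ∑ j ∈ S, ((1 / 2) * R (S.erase j) - (1 / 2) * R S) := by
    rw [swap, ← Finset.sum_sdiff hS]
    congr 1
    · apply Finset.sum_congr rfl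
      intro j hj'
      have hm := Finset.mem_sdiff.mp hj'
      exact sum_key n j (mem_range.mp hm.1) S hm.2
    · apply Finset.sum_congr rfl
      intro j hj'
      have hjn : j < n := mem_range.mp (hS hj')
      have step : ∑ y ∈ (range (2 ^ n)).filter (fun y => bit y j = 0),
            vM (y + 2 ^ j) * walsh S y
          = ∑ y ∈ (range (2 ^ n)).filter (fun y => bit y j = 0),
            vM (y + 2 ^ j) * walsh (S.erase j) y := by
        apply Finset.sum_congr rfl
        intro y hy
        have hy0 : bit y j = 0 := (Finset.mem_filter.mp hy).2
        have hw : walsh S y = walsh (S.erase j) y := by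
          unfold walsh
          rw [← Finset.prod_erase_mul S _ hj', hy0]
          simp
        rw [hw]
      rw [step, sum_key n j hjn (S.erase j) (Finset.notMem_erase j S),
        Finset.insert_erase hj']
  have expand : ∀ T : Finset ℕ, fwCoeff n vM T = ((2 : ℝ) ^ n)⁻¹ * R T := fun T => rfl
  have lhs : fwCoeff n (vMtilde n) S
      = ((2 : ℝ) ^ n)⁻¹ * ∑ y ∈ range (2 ^ n), vMtilde n y * walsh S y := rfl
  rw [lhs, hmain]
  simp_rw [expand]
  rw [Finset.sum_sub_distrib, Finset.sum_sub_distrib, Finset.sum_const, Finset.sum_const,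
    Finset.card_sdiff_of_subset hS, card_range, nsmul_eq_mul, nsmul_eq_mul, Nat.cast_sub hcard]
  simp_rw [← Finset.mul_sum]
  ring
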